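/- The quantity H(R,θ) = R^(n-1)(cos θ - (n-1)R/n) is conserved along solutions of the autonomous system dR/dZ = -tan θ, dθ/dZ = (n-1)(1/cos θ - 1/R), i.e., if (R(Z), θ(Z)) solves this system with R(Z) > 0 and θ(Z) ∈ (-π/2, π/2) for all Z in an interval, then Z ↦ H(R(Z), θ(Z)) is constant on that interval. -/

import Mathlib

open Real

noncomputable def H (n : ℕ) (R θ : ℝ) : ℝ := R ^ (n - 1) * (Real.cos θ - ((n : ℝ) - 1) * R / n)

theorem H_conserved (n : ℕ) (hn : 2 ≤ n) (a b : ℝ) (R θ : ℝ → ℝ)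
    (hdom : ∀ Z ∈ Set.Ioo a b, 0 < R Z ∧ θ Z ∈ Set.Ioo (-(π / 2)) (π / 2))
    (hR : ∀ Z ∈ Set.Ioo a b, HasDerivAt R (-Real.tan (θ Z)) Z)
    (hθ : ∀ Z ∈ Set.Ioo a b,
      HasDerivAt θ (((n : ℝ) - 1) * (1 / Real.cos (θ Z) - 1 / R Z)) Z) :
    ∀ Z₁ ∈ Set.Ioo a b, ∀ Z₂ ∈ Set.Ioo a b,
      H n (R Z₁) (θ Z₁) = H n (R Z₂) (θ Z₂) := by
  obtain ⟨m, rfl⟩ : ∃ m, n = m + 2 := ⟨n - 2, by omega⟩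
  intro Z₁ hZ₁ Z₂ hZ₂
  have key : ∀ Z ∈ Set.Ioo a b,
      HasDerivAt (fun Z => H (m + 2) (R Z) (θ Z)) 0 Z := by
    intro Z hZ
    obtain ⟨hRpos, hθ1, hθ2⟩ := hdom Z hZ
    have hcos : 0 < Real.cos (θ Z) := Real.cos_pos_of_mem_Ioo ⟨hθ1, hθ2⟩
    have h1 : HasDerivAt (fun Z => (R Z) ^ (m + 2 - 1))
        (((m + 2 - 1 : ℕ) : ℝ) * (R Z) ^ (m + 2 - 1 - 1) * (-Real.tan (θ Z))) Z :=
      (hR Z hZ).pow _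
    have h2 : HasDerivAt (fun Z => Real.cos (θ Z))
        (-Real.sin (θ Z) * (((m + 2 : ℕ) : ℝ) - 1) * (1 / Real.cos (θ Z) - 1 / R Z)) Z := by
      have := (hθ Z hZ).cos
      convert this using 1
      ring
    have h3 : HasDerivAt (fun Z => (((m + 2 : ℕ) : ℝ) - 1) * R Z / ((m + 2 : ℕ) : ℝ))
        ((((m + 2 : ℕ) : ℝ) - 1) * (-Real.tan (θ Z)) / ((m + 2 : ℕ) : ℝ)) Z :=
      (((hR Z hZ).const_mul _).div_const _)
    have hmul := h1.mul (h2.sub h3)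
    unfold H
    convert hmul using 1
    · rfl
    · rfl
    · rfl
    have hm1 : m + 2 - 1 = m + 1 := rfl
    have hm2 : m + 2 - 1 - 1 = m := rfl
    rw [hm1]
    have hm3 : m + 1 - 1 = m := rfl
    rw [hm3]
    have htan : Real.tan (θ Z) = Real.sin (θ Z) / Real.cos (θ Z) := Real.tan_eq_sin_div_cos _
    simp only [Pi.sub_apply]
    push_cast
    rw [htan]
    field_simp
    ring
  have hconst : ∀ x ∈ Set.Ioo a b, ∀ y ∈ Set.Ioo a b,
      H (m + 2) (R y) (θ y) = H (m + 2) (R x) (θ x) := by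
    intro x hx y hy
    have := (convex_Ioo a b).norm_image_sub_le_of_norm_hasDerivWithin_le
      (f := fun Z => H (m + 2) (R Z) (θ Z)) (f' := fun _ => (0 : ℝ)) (C := 0)
      (fun z hz => (key z hz).hasDerivWithinAt) (fun z _ => by simp) hx hy
    have h0 : ‖H (m + 2) (R y) (θ y) - H (m + 2) (R x) (θ x)‖ ≤ 0 := by
      simpa using this
    have := norm_nonneg (H (m + 2) (R y) (θ y) - H (m + 2) (R x) (θ x))
    have : ‖H (m + 2) (R y) (θ y) - H (m + 2) (R x) (θ x)‖ = 0 := le_antisymm h0 this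
    have := norm_eq_zero.mp this
    linarith [sub_eq_zero.mp this]
  exact (hconst Z₂ hZ₂ Z₁ hZ₁)
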